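/- Convergence of minimum values for the regularised problems: Under the regularisation setting, min_X F_0 = lim_{ε→0+} min_X F_ε, and this common value is finite. -/

import Mathlib

open Filter Topology

lemma lsc_exists_min {X : Type*} [TopologicalSpace X] [T2Space X] {f : X → EReal}
    (hf : LowerSemicontinuous f) {K : Set X} (hK : IsCompact K) (hne : K.Nonempty) :
    ∃ x ∈ K, ∀ y ∈ K, f x ≤ f y := by
  by_cases htop : ∀ y ∈ K, f y = ⊤
  · obtain ⟨x, hx⟩ := hne
    exact ⟨x, hx, fun y hy => by rw [htop y hy]; exact le_top⟩
  push_neg at htop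
  obtain ⟨y0, hy0K, hy0⟩ := htop
  set b := sInf (f '' K) with hb
  have hblt : b < ⊤ := lt_of_le_of_lt (sInf_le ⟨y0, hy0K, rfl⟩) hy0.lt_top
  haveI : Nonempty {c : EReal // b < c} := ⟨⟨⊤, hblt⟩⟩
  set T : {c : EReal // b < c} → Set X := fun c => K ∩ {x | f x ≤ c.1} with hT
  have hTne : ∀ c, (T c).Nonempty := by
    intro c
    obtain ⟨z, ⟨x, hxK, rfl⟩, hz⟩ := sInf_lt_iff.1 c.2
    exact ⟨x, hxK, hz.le⟩
  have hTcl : ∀ c, IsClosed (T c) := fun c =>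
    (hK.isClosed.inter (hf.isClosed_preimage c.1))
  have hTcp : ∀ c, IsCompact (T c) := fun c => hK.inter_right (hf.isClosed_preimage c.1)
  have hdir : Directed (· ⊇ ·) T := by
    intro c d
    refine ⟨⟨min c.1 d.1, lt_min c.2 d.2⟩, ?_, ?_⟩
    · refine fun x hx => ⟨hx.1, ?_⟩
      have h2 : f x ≤ min c.1 d.1 := hx.2
      exact h2.trans (min_le_left _ _)
    · refine fun x hx => ⟨hx.1, ?_⟩
      have h2 : f x ≤ min c.1 d.1 := hx.2
      exact h2.trans (min_le_right _ _)
  obtain ⟨x, hx⟩ := IsCompact.nonempty_iInter_of_directed_nonempty_isCompact_isClosed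
    T hdir hTne hTcp hTcl
  simp only [Set.mem_iInter] at hx
  have hxK : x ∈ K := (hx ⟨⊤, hblt⟩).1
  refine ⟨x, hxK, fun y hy => ?_⟩
  have hxb : f x ≤ b := by
    refine le_of_forall_gt_imp_ge_of_dense fun c hc => ?_
    exact (hx ⟨c, hc⟩).2
  exact hxb.trans (sInf_le ⟨y, hy, rfl⟩)

/-- Convergence of minimum values for the regularised problems:
in the abstract regularisation setting, `min_X F0 = lim_{ε→0⁺} min_X F_ε`,
and this common value is finite. -/
theorem regularised_min_values_converge
    {X Y : Type*} [MetricSpace X] [MetricSpace Y]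
    (Λ : X → Y) (hΛ : Continuous Λ) (x0 : X)
    (R : X → EReal)
    (hRbot : ∀ x : X, R x ≠ ⊥)
    (hRnetop : ∃ x : X, R x ≠ ⊤)
    (hRlsc : LowerSemicontinuous R)
    (hRcompact : ∀ C : ℝ, 0 < C → IsCompact {x : X | R x ≤ (C : EReal)})
    (α γ a ε0 : ℝ)
    (hα : 0 < α) (hγ : 0 < γ) (hγα : γ < α) (ha : 0 < a) (hε0 : 0 < ε0)
    (Λε : ℝ → Y) (hΛε : ∀ ε : ℝ, 0 < ε → ε ≤ ε0 → dist (Λε ε) (Λ x0) ≤ ε)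
    (hR0 : R x0 ≠ ⊤)
    (F : ℝ → X → EReal)
    (hF : ∀ ε : ℝ, 0 < ε → ε ≤ ε0 → ∀ x : X,
      F ε x = ((dist (Λ x) (Λε ε) ^ α / ε ^ γ : ℝ) : EReal) + (a : EReal) * R x)
    (F0 : X → EReal)
    (hF0eq : ∀ x : X, Λ x = Λ x0 → F0 x = (a : EReal) * R x)
    (hF0top : ∀ x : X, Λ x ≠ Λ x0 → F0 x = ⊤) :
    ∃ xm : X, (∀ x : X, F0 xm ≤ F0 x) ∧ F0 xm ≠ ⊤ ∧ F0 xm ≠ ⊥ ∧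
      Tendsto (fun ε : ℝ => ⨅ x : X, F ε x) (𝓝[>] (0 : ℝ)) (𝓝 (F0 xm)) := by
  classical
  have hanonneg : (0:EReal) ≤ (a:EReal) := by exact_mod_cast ha.le
  -- construction of the minimiser xm
  set S : Set X := Λ ⁻¹' {Λ x0} with hS
  have hScl : IsClosed S := isClosed_singleton.preimage hΛ
  set C0 : ℝ := max 1 (R x0).toReal with hC0
  have hC0pos : (0:ℝ) < C0 := lt_of_lt_of_le one_pos (le_max_left _ _)
  have hRx0coe : ((R x0).toReal : EReal) = R x0 := EReal.coe_toReal hR0 (hRbot x0)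
  have hx0le : R x0 ≤ (C0 : EReal) := by
    rw [← hRx0coe]
    exact_mod_cast le_max_right _ _
  have hx0K0 : x0 ∈ S ∩ {x | R x ≤ (C0 : EReal)} := ⟨rfl, hx0le⟩
  have hK0cp : IsCompact (S ∩ {x | R x ≤ (C0 : EReal)}) :=
    (hRcompact C0 hC0pos).inter_left hScl
  obtain ⟨xm, hxmK0, hxmmin⟩ := lsc_exists_min hRlsc hK0cp ⟨x0, hx0K0⟩
  have hΛxm : Λ xm = Λ x0 := hxmK0.1
  have hRxmle : R xm ≤ R x0 := hxmmin x0 hx0K0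
  have hRxmtop : R xm ≠ ⊤ := fun h => hR0 (top_le_iff.1 (h ▸ hRxmle))
  have hRxmbot : R xm ≠ ⊥ := hRbot xm
  set m' : ℝ := a * (R xm).toReal with hm'
  have hFm : F0 xm = (m' : EReal) := by
    rw [hF0eq xm hΛxm, hm', EReal.coe_mul, EReal.coe_toReal hRxmtop hRxmbot]
  -- minimality of F0 xm
  have hminF0 : ∀ x : X, F0 xm ≤ F0 x := by
    intro x
    by_cases hx : Λ x = Λ x0
    · rw [hF0eq x hx, hF0eq xm hΛxm]
      have hRle : R xm ≤ R x := by
        by_cases hxC : R x ≤ (C0 : EReal)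
        · exact hxmmin x ⟨hx, hxC⟩
        · exact (hRxmle.trans hx0le).trans (le_of_not_ge hxC)
      exact mul_le_mul_of_nonneg_left hRle hanonneg
    · rw [hF0top x hx]; exact le_top
  -- lower bound for F by the regularisation term
  have hFge : ∀ ε : ℝ, 0 < ε → ε ≤ ε0 → ∀ x : X, (a : EReal) * R x ≤ F ε x := by
    intro ε hε hεle x
    rw [hF ε hε hεle x]
    refine le_add_of_nonneg_left ?_
    exact_mod_cast div_nonneg (Real.rpow_nonneg dist_nonneg _) (Real.rpow_nonneg hε.le _)
  refine ⟨xm, hminF0, by rw [hFm]; exact EReal.coe_ne_top _, by rw [hFm]; exact EReal.coe_ne_bot _, ?_⟩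
  rw [hFm]
  refine tendsto_order.2 ⟨?_, ?_⟩
  · -- lower bound: ∀ b < m', eventually b < inf F ε
    intro b hb
    obtain ⟨c, hbc, hc⟩ := EReal.exists_between_coe_real hb
    have hcm : c < m' := by exact_mod_cast hc
    by_contra hcon
    rw [not_eventually] at hcon
    have hev0 : ∀ᶠ ε in 𝓝[>] (0:ℝ), ε ∈ Set.Ioc 0 ε0 :=
      Ioc_mem_nhdsGT_of_mem ⟨le_refl 0, hε0⟩
    have hfreq : ∃ᶠ ε in 𝓝[>] (0:ℝ),
        (0 < ε ∧ ε ≤ ε0 ∧ ⨅ x : X, F ε x < (c : EReal)) := by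
      refine (hcon.and_eventually hev0).mono ?_
      rintro ε ⟨hnb, hε, hεle⟩
      exact ⟨hε, hεle, lt_of_le_of_lt (not_lt.1 hnb) hbc⟩
    obtain ⟨u, hu, hup⟩ := Filter.exists_seq_forall_of_frequently hfreq
    have hupos : ∀ n, 0 < u n := fun n => (hup n).1
    have hule : ∀ n, u n ≤ ε0 := fun n => (hup n).2.1
    have hx' : ∀ n, ∃ x : X, F (u n) x < (c : EReal) := fun n =>
      iInf_lt_iff.1 (hup n).2.2
    choose x hx using hx'
    -- x n lies in a fixed compact sublevel set
    set C : ℝ := max 1 (c / a) with hCdef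
    have hCpos : (0:ℝ) < C := lt_of_lt_of_le one_pos (le_max_left _ _)
    have hxK : ∀ n, x n ∈ {y : X | R y ≤ (C : EReal)} := by
      intro n
      have h1 : (a : EReal) * R (x n) ≤ (c : EReal) :=
        ((hFge (u n) (hupos n) (hule n) (x n)).trans (hx n).le)
      have h2 : R (x n) ≤ (c : EReal) / (a : EReal) := by
        rw [EReal.le_div_iff_mul_le (by exact_mod_cast ha) (EReal.coe_ne_top a)]
        rw [mul_comm]; exact h1
      have h3 : ((c / a : ℝ) : EReal) = (c : EReal) / (a : EReal) := by
        rw [div_eq_mul_inv, EReal.coe_mul, EReal.coe_inv]; rfl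
      have h4 : ((c / a : ℝ) : EReal) ≤ (C : EReal) := by exact_mod_cast le_max_right _ _
      exact (h2.trans (h3.symm.le.trans h4))
    have hKcp : IsCompact {y : X | R y ≤ (C : EReal)} := hRcompact C hCpos
    -- lower bound for R on that compact set
    obtain ⟨xB, hxBK, hxBmin⟩ := lsc_exists_min hRlsc hKcp ⟨x 0, hxK 0⟩
    have hxBtop : R xB ≠ ⊤ := ne_top_of_le_ne_top (EReal.coe_ne_top C) hxBK
    set b' : ℝ := (R xB).toReal with hb'
    have hb'coe : (b' : EReal) = R xB := EReal.coe_toReal hxBtop (hRbot xB)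
    have hRlow : ∀ n, (b' : EReal) ≤ R (x n) := fun n =>
      hb'coe.le.trans (hxBmin (x n) (hxK n))
    -- bound on the distance term
    set D : ℝ := c - a * b' with hD
    have hdistb : ∀ n, dist (Λ (x n)) (Λε (u n)) ^ α / u n ^ γ < D := by
      intro n
      have h1 : ((dist (Λ (x n)) (Λε (u n)) ^ α / u n ^ γ : ℝ) : EReal)
          + ((a * b' : ℝ) : EReal) < (c : EReal) := by
        refine lt_of_le_of_lt ?_ ((hF (u n) (hupos n) (hule n) (x n)) ▸ hx n)
        refine add_le_add (le_refl _) ?_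
        rw [EReal.coe_mul]
        exact mul_le_mul_of_nonneg_left (hRlow n) hanonneg
      rw [← EReal.coe_add, EReal.coe_lt_coe_iff] at h1
      linarith
    have hDpos : 0 < D :=
      lt_of_le_of_lt (div_nonneg (Real.rpow_nonneg dist_nonneg _)
        (Real.rpow_nonneg (hupos 0).le _)) (hdistb 0)
    have hdistb2 : ∀ n, dist (Λ (x n)) (Λ x0) ≤ (D * u n ^ γ) ^ (1/α) + u n := by
      intro n
      have h1 : dist (Λ (x n)) (Λε (u n)) ^ α ≤ D * u n ^ γ := by
        have := (hdistb n).le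
        rw [div_le_iff₀ (Real.rpow_pos_of_pos (hupos n) γ)] at this
        linarith [this]
      have h2 : dist (Λ (x n)) (Λε (u n)) ≤ (D * u n ^ γ) ^ (1/α) := by
        have h3 : (dist (Λ (x n)) (Λε (u n)) ^ α) ^ (1/α) = dist (Λ (x n)) (Λε (u n)) := by
          rw [← Real.rpow_mul dist_nonneg, mul_one_div, div_self hα.ne', Real.rpow_one]
        rw [← h3]
        exact Real.rpow_le_rpow (Real.rpow_nonneg dist_nonneg _) h1 (by positivity)
      calc dist (Λ (x n)) (Λ x0) ≤ dist (Λ (x n)) (Λε (u n)) + dist (Λε (u n)) (Λ x0) :=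
            dist_triangle _ _ _
        _ ≤ (D * u n ^ γ) ^ (1/α) + u n :=
            add_le_add h2 (hΛε (u n) (hupos n) (hule n))
    -- the image sequence converges to Λ x0
    have hu0 : Tendsto u atTop (𝓝 (0:ℝ)) := hu.mono_right nhdsWithin_le_nhds
    have hbnd_cont : ContinuousAt (fun ε : ℝ => (D * ε ^ γ) ^ (1/α) + ε) 0 := by
      have h1 : ContinuousAt (fun ε : ℝ => D * ε ^ γ) 0 :=
        continuousAt_const.mul (Real.continuousAt_rpow_const 0 γ (Or.inr hγ.le))
      exact (h1.rpow_const (Or.inr (by positivity))).add continuousAt_id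
    have hbnd_tend : Tendsto (fun n => (D * u n ^ γ) ^ (1/α) + u n) atTop (𝓝 0) := by
      have := (hbnd_cont.tendsto).comp hu0
      have hval : (D * (0:ℝ) ^ γ) ^ (1/α) + 0 = 0 := by
        rw [Real.zero_rpow hγ.ne', mul_zero, Real.zero_rpow (by positivity : (1/α : ℝ) ≠ 0),
          zero_add]
      rw [hval] at this
      exact this
    have hdist_tend : Tendsto (fun n => dist (Λ (x n)) (Λ x0)) atTop (𝓝 0) :=
      squeeze_zero (fun n => dist_nonneg) hdistb2 hbnd_tend
    have hΛxn : Tendsto (fun n => Λ (x n)) atTop (𝓝 (Λ x0)) :=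
      tendsto_iff_dist_tendsto_zero.2 hdist_tend
    -- extract a convergent subsequence
    obtain ⟨xs, hxsK, φ, hφ, hxφ⟩ := hKcp.tendsto_subseq hxK
    have hΛxs : Λ xs = Λ x0 := by
      have h1 : Tendsto (fun n => Λ (x (φ n))) atTop (𝓝 (Λ xs)) :=
        ((hΛ.tendsto xs).comp hxφ)
      have h2 : Tendsto (fun n => Λ (x (φ n))) atTop (𝓝 (Λ x0)) :=
        hΛxn.comp hφ.tendsto_atTop
      exact tendsto_nhds_unique h1 h2
    -- lower semicontinuity gives a contradiction
    set t : ℝ := (c + m') / 2 with ht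
    have hct : c < t := by rw [ht]; linarith
    have htm : t < m' := by rw [ht]; linarith
    have hMle : (m' : EReal) ≤ (a : EReal) * R xs := by
      rw [← hFm, ← hF0eq xs hΛxs]; exact hminF0 xs
    have hRxs : ((t / a : ℝ) : EReal) < R xs := by
      by_contra hle
      push_neg at hle
      have h1 : (a : EReal) * R xs ≤ (a : EReal) * ((t / a : ℝ) : EReal) :=
        mul_le_mul_of_nonneg_left hle hanonneg
      have h2 : (a : EReal) * ((t / a : ℝ) : EReal) = (t : EReal) := by
        rw [← EReal.coe_mul]
        congr 1
        field_simp
      rw [h2] at h1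
      have : (m' : EReal) ≤ (t : EReal) := hMle.trans h1
      have : m' ≤ t := by exact_mod_cast this
      linarith
    have hev := hxφ.eventually (hRlsc xs _ hRxs)
    obtain ⟨n, hn⟩ := hev.exists
    have h1 : (t : EReal) ≤ (a : EReal) * R (x (φ n)) := by
      have h2 : (a : EReal) * ((t / a : ℝ) : EReal) ≤ (a : EReal) * R (x (φ n)) :=
        mul_le_mul_of_nonneg_left hn.le hanonneg
      have h3 : (a : EReal) * ((t / a : ℝ) : EReal) = (t : EReal) := by
        rw [← EReal.coe_mul]; congr 1; field_simp
      rwa [h3] at h2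
    have h4 : (t : EReal) < (c : EReal) :=
      lt_of_le_of_lt (h1.trans (hFge (u (φ n)) (hupos (φ n)) (hule (φ n)) (x (φ n))))
        (hx (φ n))
    have : t < c := by exact_mod_cast h4
    linarith
  · -- upper bound: ∀ b > m', eventually inf F ε < b
    intro b hb
    obtain ⟨c, hc, hcb⟩ := EReal.exists_between_coe_real hb
    have hmc : m' < c := by exact_mod_cast hc
    have htend : Tendsto (fun ε : ℝ => ε ^ (α - γ)) (𝓝[>] (0:ℝ)) (𝓝 0) := by
      have h1 : ContinuousAt (fun ε : ℝ => ε ^ (α - γ)) 0 :=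
        Real.continuousAt_rpow_const 0 _ (Or.inr (by linarith))
      have h2 := h1.tendsto
      rw [Real.zero_rpow (by linarith : α - γ ≠ 0)] at h2
      exact h2.mono_left nhdsWithin_le_nhds
    have hev1 : ∀ᶠ ε in 𝓝[>] (0:ℝ), ε ^ (α - γ) < c - m' :=
      htend.eventually_lt_const (by linarith)
    have hev2 : ∀ᶠ ε in 𝓝[>] (0:ℝ), ε ∈ Set.Ioc 0 ε0 :=
      Ioc_mem_nhdsGT_of_mem ⟨le_refl 0, hε0⟩
    filter_upwards [hev1, hev2] with ε h1 h2
    obtain ⟨hε, hεle⟩ := h2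
    have hdle : dist (Λ xm) (Λε ε) ≤ ε := by
      rw [hΛxm, dist_comm]; exact hΛε ε hε hεle
    have hd1 : dist (Λ xm) (Λε ε) ^ α / ε ^ γ ≤ ε ^ (α - γ) := by
      rw [Real.rpow_sub hε]
      gcongr
    have hFxm : F ε xm ≤ ((ε ^ (α - γ) + m' : ℝ) : EReal) := by
      rw [hF ε hε hεle xm, EReal.coe_add]
      refine add_le_add (by exact_mod_cast hd1) ?_
      rw [hm', EReal.coe_mul, EReal.coe_toReal hRxmtop hRxmbot]
    have hlt : ((ε ^ (α - γ) + m' : ℝ) : EReal) < (c : EReal) := by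
      have : ε ^ (α - γ) + m' < c := by linarith
      exact_mod_cast this
    exact lt_of_le_of_lt ((iInf_le _ xm).trans hFxm) (lt_of_lt_of_le hlt hcb.le)
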